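/- arXiv:1302.1611 — 3 statements merged into one kernel-verified Lean document; each statement's English description precedes it below -/
import Mathlib

section
/- For every ε ∈ (0, 1], ∫_{ε/2}^{∞} 4x / ( log(4x/ε) (e^{x²/2} − 1) ) dx ≤ 8 log log(4/ε) + 7. -/
open MeasureTheory Real

lemma aux_log_le_sinh {x : ℝ} (hx : 1 ≤ x) : Real.log x ≤ (x - x⁻¹) / 2 := by
  rw [← Real.sinh_log (lt_of_lt_of_le one_pos hx)]
  exact Real.self_le_sinh_iff.mpr (Real.log_nonneg hx)

lemma aux_numeric :
    8 * (-Real.log (Real.log 2)) + (4 / Real.log 4) * (-Real.log (1 - Real.exp (-(1/2)))) ≤ 7 := by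
  have hL1 := Real.log_two_gt_d9
  have hL2 := Real.log_two_lt_d9
  have hLpos : 0 < Real.log 2 := by linarith
  set L := Real.log 2 with hLdef
  -- bound on -log L
  have hLinv : L⁻¹ ≤ 1.4427 := by
    rw [inv_le_comm₀ hLpos (by norm_num)]
    norm_num
    linarith
  have hLinv1 : (1:ℝ) ≤ L⁻¹ := by
    rw [le_inv_comm₀ one_pos hLpos]
    norm_num; linarith
  have hlogL : -Real.log L ≤ 0.3748 := by
    rw [← Real.log_inv]
    have h3 := aux_log_le_sinh hLinv1
    rw [inv_inv] at h3
    linarith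
  -- s = exp (1/2)
  have he1 := Real.exp_one_gt_d9
  have he2 := Real.exp_one_lt_d9
  set s := Real.exp (1/2) with hsdef
  have hs0 : 0 < s := Real.exp_pos _
  have hssq : s ^ 2 = Real.exp 1 := by
    rw [hsdef, ← Real.exp_nat_mul]
    norm_num
  have hs1 : 1.6487 < s := by nlinarith
  have hs2 : s < 1.6488 := by nlinarith
  have hsim : s⁻¹ * s = 1 := inv_mul_cancel₀ hs0.ne'
  have hsinvpos : 0 < s⁻¹ := inv_pos.mpr hs0
  have hsinv1 : s⁻¹ < 0.6066 := by nlinarith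
  have hsinv2 : 0.6065 < s⁻¹ := by nlinarith
  have hw0 : 0 < 1 - s⁻¹ := by linarith
  have hw1 : (1:ℝ) ≤ (1 - s⁻¹)⁻¹ := by
    rw [le_inv_comm₀ one_pos hw0]; norm_num; linarith
  have hwim : (1 - s⁻¹)⁻¹ * (1 - s⁻¹) = 1 := inv_mul_cancel₀ hw0.ne'
  have hwinv : (1 - s⁻¹)⁻¹ ≤ 2.5420 := by nlinarith
  have hlogw : -Real.log (1 - s⁻¹) ≤ 1.0744 := by
    rw [← Real.log_inv]
    have h3 := aux_log_le_sinh hw1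
    rw [inv_inv] at h3
    linarith
  have hlogwpos : 0 ≤ -Real.log (1 - s⁻¹) := by
    rw [← Real.log_inv]
    exact Real.log_nonneg hw1
  have hexp : Real.exp (-(1/2:ℝ)) = s⁻¹ := by
    rw [hsdef, ← Real.exp_neg]
  have hlog4 : Real.log 4 = 2 * L := by
    rw [hLdef, show (4:ℝ) = 2 ^ 2 by norm_num, Real.log_pow]
    push_cast; ring
  have hcoef : 4 / Real.log 4 ≤ 2.8854 := by
    rw [hlog4, div_le_iff₀ (by linarith)]
    nlinarith
  have hcoefpos : 0 ≤ 4 / Real.log 4 := by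
    rw [hlog4]; positivity
  rw [hexp]
  have := mul_le_mul hcoef hlogw hlogwpos (by norm_num)
  linarith

section
open Set Filter

/-- For every `ε ∈ (0,1]`,
`∫_{ε/2}^{∞} 4x / (log(4x/ε) (e^{x²/2} − 1)) dx ≤ 8 log log (4/ε) + 7`. -/
theorem integral_four_x_div_log_exp_sq_sub_one (ε : ℝ) (hε : ε ∈ Set.Ioc (0 : ℝ) 1) :
    ∫ x in Set.Ioi (ε / 2), 4 * x / (Real.log (4 * x / ε) * (Real.exp (x ^ 2 / 2) - 1))
      ≤ 8 * Real.log (Real.log (4 / ε)) + 7 := by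
  obtain ⟨hε0, hε1⟩ := hε
  set f : ℝ → ℝ := fun x => 4 * x / (Real.log (4 * x / ε) * (Real.exp (x ^ 2 / 2) - 1)) with hfdef
  set a : ℝ := ε / 2 with hadef
  have ha0 : 0 < a := by positivity
  have ha1 : a ≤ 1 / 2 := by rw [hadef]; linarith
  have hL2pos : 0 < Real.log 2 := Real.log_pos (by norm_num)
  have hlog4ε : (1:ℝ) < Real.log (4 / ε) := by
    rw [lt_log_iff_exp_lt (by positivity)]
    calc Real.exp 1 < 2.7182818286 := Real.exp_one_lt_d9
      _ ≤ 4 / ε := by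
        rw [le_div_iff₀ hε0]; nlinarith
  have hRHSpos : 0 ≤ 8 * Real.log (Real.log (4 / ε)) + 7 :=
    by have := Real.log_nonneg hlog4ε.le; linarith
  by_cases hint : IntegrableOn f (Set.Ioi a) volume
  swap
  · rw [MeasureTheory.integral_undef hint]; exact hRHSpos
  -- split the integral
  have hsplit : Set.Ioc a 1 ∪ Set.Ioi (1:ℝ) = Set.Ioi a := Set.Ioc_union_Ioi_eq_Ioi (by linarith)
  have hIoc : IntegrableOn f (Set.Ioc a 1) volume :=
    hint.mono_set (by rw [← hsplit]; exact Set.subset_union_left)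
  have hIoi1 : IntegrableOn f (Set.Ioi (1:ℝ)) volume :=
    hint.mono_set (by rw [← hsplit]; exact Set.subset_union_right)
  have hsum : ∫ x in Set.Ioi a, f x = (∫ x in Set.Ioc a 1, f x) + ∫ x in Set.Ioi 1, f x := by
    rw [← hsplit, setIntegral_union (Set.Ioc_disjoint_Ioi le_rfl) measurableSet_Ioi hIoc hIoi1]
  -- facts on [a,1]
  have hfacts : ∀ x : ℝ, a ≤ x → 0 < x ∧ 2 ≤ 4 * x / ε ∧ 0 < Real.log (4 * x / ε)
      ∧ 0 < Real.exp (x ^ 2 / 2) - 1 := by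
    intro x hx
    have hx0 : 0 < x := lt_of_lt_of_le ha0 hx
    have h2 : 2 ≤ 4 * x / ε := by
      rw [le_div_iff₀ hε0]; rw [hadef] at hx; linarith
    have hD : 0 < Real.log (4 * x / ε) := Real.log_pos (by linarith)
    have hE : 0 < Real.exp (x ^ 2 / 2) - 1 := by
      have h := Real.add_one_le_exp (x ^ 2 / 2)
      nlinarith [sq_nonneg x, pow_pos hx0 2]
    exact ⟨hx0, h2, hD, hE⟩
  -- FRONT PART
  set g₁ : ℝ → ℝ := fun x => 8 / (x * Real.log (4 * x / ε)) with hg₁def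
  have huIcc : Set.uIcc a (1:ℝ) = Set.Icc a 1 := Set.uIcc_of_le (by linarith)
  have hFderiv : ∀ x ∈ Set.uIcc a (1:ℝ),
      HasDerivAt (fun x => 8 * Real.log (Real.log (4 * x / ε))) (g₁ x) x := by
    intro x hx
    rw [huIcc] at hx
    obtain ⟨hx0, h2, hD, hE⟩ := hfacts x hx.1
    have h4x : (0:ℝ) < 4 * x / ε := by linarith
    have h1 : HasDerivAt (fun x : ℝ => 4 * x / ε) (4 / ε) x := by
      simpa using ((hasDerivAt_id x).const_mul 4).div_const ε
    have h2' : HasDerivAt (fun x : ℝ => Real.log (4 * x / ε)) ((4 / ε) / (4 * x / ε)) x :=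
      h1.log h4x.ne'
    have h3 : HasDerivAt (fun x : ℝ => 8 * Real.log (Real.log (4 * x / ε)))
        (8 * (((4 / ε) / (4 * x / ε)) / Real.log (4 * x / ε))) x :=
      (h2'.log hD.ne').const_mul 8
    convert h3 using 1
    rw [hg₁def]
    field_simp
  have hg₁cont : ∀ x ∈ Set.uIcc a (1:ℝ), ContinuousAt g₁ x := by
    intro x hx
    rw [huIcc] at hx
    obtain ⟨hx0, h2, hD, hE⟩ := hfacts x hx.1
    have h4x : (0:ℝ) < 4 * x / ε := by linarith
    have c1 : ContinuousAt (fun x : ℝ => 4 * x / ε) x := by fun_prop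
    have c2 : ContinuousAt (fun x : ℝ => Real.log (4 * x / ε)) x := c1.log h4x.ne'
    have c3 : ContinuousAt (fun x : ℝ => x * Real.log (4 * x / ε)) x := continuousAt_id.mul c2
    exact continuousAt_const.div c3 (by positivity)
  have hg₁ii : IntervalIntegrable g₁ volume a 1 :=
    (ContinuousOn.intervalIntegrable (fun x hx => (hg₁cont x hx).continuousWithinAt))
  have hg₁int : IntegrableOn g₁ (Set.Ioc a 1) volume :=
    (intervalIntegrable_iff_integrableOn_Ioc_of_le (by linarith)).mp hg₁ii
  have hfront_le : (∫ x in Set.Ioc a 1, f x) ≤ ∫ x in Set.Ioc a 1, g₁ x := by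
    apply setIntegral_mono_on hIoc hg₁int measurableSet_Ioc
    intro x hx
    obtain ⟨hx0, h2, hD, hE⟩ := hfacts x hx.1.le
    rw [hfdef, hg₁def]
    simp only
    rw [div_le_div_iff₀ (by positivity) (by positivity)]
    have hexp := Real.add_one_le_exp (x ^ 2 / 2)
    nlinarith [mul_le_mul_of_nonneg_left (show x ^ 2 / 2 ≤ Real.exp (x ^ 2 / 2) - 1 by linarith)
      (show (0:ℝ) ≤ 8 * Real.log (4 * x / ε) by positivity)]
  have h4aε : 4 * a / ε = 2 := by rw [hadef]; field_simp; ring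
  have hfront_val : (∫ x in Set.Ioc a 1, g₁ x)
      = 8 * Real.log (Real.log (4 / ε)) - 8 * Real.log (Real.log 2) := by
    rw [← intervalIntegral.integral_of_le (by linarith : a ≤ 1),
      intervalIntegral.integral_eq_sub_of_hasDerivAt hFderiv hg₁ii]
    rw [show (4 * 1 / ε : ℝ) = 4 / ε by ring, ← h4aε]
  -- TAIL PART
  set g₂ : ℝ → ℝ := fun x => 4 * x / (Real.log 4 * (Real.exp (x ^ 2 / 2) - 1)) with hg₂def
  have hlog4pos : 0 < Real.log 4 := Real.log_pos (by norm_num)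
  set G : ℝ → ℝ := fun x => (4 / Real.log 4) * Real.log (1 - Real.exp (-(x ^ 2 / 2))) with hGdef
  have hGfacts : ∀ x : ℝ, 0 < x → 0 < 1 - Real.exp (-(x ^ 2 / 2)) := by
    intro x hx0
    have : Real.exp (-(x ^ 2 / 2)) < 1 := by
      rw [Real.exp_lt_one_iff]
      have : 0 < x ^ 2 / 2 := by positivity
      linarith
    linarith
  have hGderiv : ∀ x ∈ Set.Ioi (1:ℝ), HasDerivAt G (g₂ x) x := by
    intro x hx
    have hx0 : (0:ℝ) < x := by have := hx.out; linarith
    have hw := hGfacts x hx0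
    have h1 : HasDerivAt (fun x : ℝ => -(x ^ 2 / 2)) (-x) x := by
      have := ((hasDerivAt_pow 2 x).div_const 2).neg
      refine this.congr_deriv ?_
      push_cast; ring
    have h2 : HasDerivAt (fun x : ℝ => 1 - Real.exp (-(x ^ 2 / 2)))
        (x * Real.exp (-(x ^ 2 / 2))) x := by
      have := (h1.exp).const_sub 1
      refine this.congr_deriv ?_; ring
    have h3 : HasDerivAt G
        ((4 / Real.log 4) * ((x * Real.exp (-(x ^ 2 / 2))) / (1 - Real.exp (-(x ^ 2 / 2))))) x :=
      (h2.log hw.ne').const_mul _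
    convert h3 using 1
    rw [hg₂def]
    have hexpne : Real.exp (x ^ 2 / 2) ≠ 0 := (Real.exp_pos _).ne'
    have hE : 0 < Real.exp (x ^ 2 / 2) - 1 := (hfacts x (by linarith [hx.out])).2.2.2
    rw [Real.exp_neg]
    field_simp
  have hg₂pos : ∀ x ∈ Set.Ioi (1:ℝ), 0 ≤ g₂ x := by
    intro x hx
    have hE := (hfacts x (by linarith [hx.out])).2.2.2
    have hx0 : (0:ℝ) < x := by linarith [hx.out]
    rw [hg₂def]
    positivity
  have hGcont : ContinuousWithinAt G (Set.Ici (1:ℝ)) 1 := by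
    apply ContinuousAt.continuousWithinAt
    have hw := hGfacts 1 one_pos
    have c1 : ContinuousAt (fun x : ℝ => 1 - Real.exp (-(x ^ 2 / 2))) 1 := by fun_prop
    exact (c1.log hw.ne').const_mul _
  have hGtendsto : Tendsto G atTop (nhds 0) := by
    have t0 : Tendsto (fun x : ℝ => x ^ 2 / 2) atTop atTop :=
      (tendsto_pow_atTop two_ne_zero).atTop_div_const two_pos
    have t1 : Tendsto (fun x : ℝ => -(x ^ 2 / 2)) atTop atBot := tendsto_neg_atTop_atBot.comp t0
    have t2 : Tendsto (fun x : ℝ => Real.exp (-(x ^ 2 / 2))) atTop (nhds 0) :=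
      Real.tendsto_exp_atBot.comp t1
    have t3 : Tendsto (fun x : ℝ => 1 - Real.exp (-(x ^ 2 / 2))) atTop (nhds 1) := by
      simpa using tendsto_const_nhds.sub t2
    have t4 : Tendsto (fun x : ℝ => Real.log (1 - Real.exp (-(x ^ 2 / 2)))) atTop (nhds 0) := by
      have := ((Real.continuousAt_log one_ne_zero).tendsto).comp t3
      simpa [Function.comp_def] using this
    have t5 := t4.const_mul (4 / Real.log 4)
    simpa using t5
  have htail_val : (∫ x in Set.Ioi (1:ℝ), g₂ x)
      = -((4 / Real.log 4) * Real.log (1 - Real.exp (-(1/2)))) := by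
    rw [integral_Ioi_of_hasDerivAt_of_nonneg hGcont hGderiv hg₂pos hGtendsto]
    rw [hGdef]
    norm_num
  have hg₂int : IntegrableOn g₂ (Set.Ioi (1:ℝ)) volume :=
    integrableOn_Ioi_deriv_of_nonneg hGcont hGderiv hg₂pos hGtendsto
  have htail_le : (∫ x in Set.Ioi (1:ℝ), f x) ≤ ∫ x in Set.Ioi (1:ℝ), g₂ x := by
    apply setIntegral_mono_on hIoi1 hg₂int measurableSet_Ioi
    intro x hx
    obtain ⟨hx0, h2, hD, hE⟩ := hfacts x (by linarith [hx.out])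
    have hlogle : Real.log 4 ≤ Real.log (4 * x / ε) := by
      apply Real.log_le_log (by norm_num)
      rw [le_div_iff₀ hε0]
      nlinarith [hx.out]
    rw [hfdef, hg₂def]
    simp only
    apply div_le_div_of_nonneg_left (by positivity) (by positivity)
    exact mul_le_mul_of_nonneg_right hlogle hE.le
  -- numeric lemma
  have hnum := aux_numeric
  calc ∫ x in Set.Ioi a, f x = (∫ x in Set.Ioc a 1, f x) + ∫ x in Set.Ioi 1, f x := hsum
    _ ≤ (8 * Real.log (Real.log (4 / ε)) - 8 * Real.log (Real.log 2))
        + -((4 / Real.log 4) * Real.log (1 - Real.exp (-(1/2)))) := by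
      rw [← hfront_val, ← htail_val]; exact add_le_add hfront_le htail_le
    _ ≤ 8 * Real.log (Real.log (4 / ε)) + 7 := by linarith

end
end

section
/- Let ρ_0 be a probability measure on a measurable space 𝒳 and, for each Δ ∈ ℝ, let ρ_Δ be a probability measure on 𝒳 absolutely continuous with respect to ρ_0. Let λ be a finite positive measure on ℝ, set ρ̄ = ∫ Δ ρ_Δ dλ(Δ) (a positive measure on 𝒳) and C_λ = 1 + ∫ Δ dλ(Δ). Then for any measurable function ψ : 𝒳 → {0,1}, ρ_0(ψ = 1) + ∫ Δ ρ_Δ(ψ = 0) dλ(Δ) ≥ (1/C_λ) exp(−KL(ρ_0, ρ̄)). -/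
open MeasureTheory Real

open scoped Classical in
/-- The Kullback–Leibler divergence `KL(ρ, ρ') = ∫ log (dρ/dρ') dρ`, with value `⊤`
when it is not well-defined (i.e. when `ρ ⋠ ρ'` or the log-likelihood ratio is not
integrable). -/
noncomputable def klDiv {X : Type*} [MeasurableSpace X] (ρ ρ' : Measure X) : EReal :=
  if ρ ≪ ρ' ∧ Integrable (llr ρ ρ') ρ then ((∫ x, llr ρ ρ' x ∂ρ : ℝ) : EReal) else ⊤

/-- `x ↦ exp (-x)` for extended-real `x ∈ (-∞, ∞]`, with `exp (-⊤) = 0`. -/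
noncomputable def expNeg (x : EReal) : ℝ := if x = ⊤ then 0 else Real.exp (- x.toReal)

/-- The positive measure `ρ̄ = ∫ Δ ρ_Δ dλ(Δ)`. -/
noncomputable def mixMeasure {X : Type*} [MeasurableSpace X]
    (lam : Measure ℝ) (ρ : ℝ → Measure X) : Measure X :=
  (lam.withDensity fun Δ => ENNReal.ofReal Δ).bind ρ

lemma aux_test {X : Type*} [MeasurableSpace X] (ρ₀ μ : Measure X)
    [IsProbabilityMeasure ρ₀] [IsFiniteMeasure μ] (hμρ : μ ≪ ρ₀)
    (A : Set X) (hA : MeasurableSet A) :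
    (1 + (μ Set.univ).toReal)⁻¹ * expNeg (klDiv ρ₀ μ)
      ≤ (ρ₀ A).toReal + (μ Aᶜ).toReal := by
  set M : ℝ := (μ Set.univ).toReal with hM
  have hM0 : 0 ≤ M := ENNReal.toReal_nonneg
  have hC : (0:ℝ) < 1 + M := by linarith
  by_cases h : ρ₀ ≪ μ ∧ Integrable (llr ρ₀ μ) ρ₀
  · obtain ⟨hac, hint⟩ := h
    rw [klDiv, if_pos ⟨hac, hint⟩, expNeg]
    rw [if_neg (by simp), EReal.toReal_coe]
    set f : X → ℝ := llr ρ₀ μ with hf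
    have hfmeas : Measurable f := measurable_llr _ _
    -- e := exp (-f) equals toReal (dμ/dρ₀) a.e.
    have he_ae : (fun x => exp (- f x)) =ᵐ[ρ₀] fun x => (μ.rnDeriv ρ₀ x).toReal :=
      exp_neg_llr hac
    have he_int : Integrable (fun x => exp (- f x)) ρ₀ :=
      (Measure.integrable_toReal_rnDeriv).congr he_ae.symm
    -- min and max integrability
    have hmin_int : Integrable (fun x => min 0 (- f x)) ρ₀ := by
      refine (hint.neg).mono (measurable_const.min hfmeas.neg).aestronglyMeasurable
        (Filter.Eventually.of_forall fun x => ?_)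
      simp only [Real.norm_eq_abs, Pi.neg_apply]
      rcases le_or_gt (-f x) 0 with h1 | h1
      · rw [min_eq_right h1]
      · rw [min_eq_left h1.le]; simp [abs_nonneg]
    have hmax_int : Integrable (fun x => max 0 (- f x)) ρ₀ := by
      refine (hint.neg).mono (measurable_const.max hfmeas.neg).aestronglyMeasurable
        (Filter.Eventually.of_forall fun x => ?_)
      simp only [Real.norm_eq_abs, Pi.neg_apply]
      rcases le_or_gt (-f x) 0 with h1 | h1
      · rw [max_eq_left h1]; simp [abs_nonneg]
      · rw [max_eq_right h1.le]
    -- exp of min is bounded by 1, exp of max bounded by 1 + exp(-f)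
    have hexpmin_int : Integrable (fun x => exp (min 0 (- f x))) ρ₀ := by
      refine (integrable_const (1:ℝ)).mono
        ((measurable_const.min hfmeas.neg).exp).aestronglyMeasurable
        (Filter.Eventually.of_forall fun x => ?_)
      rw [Real.norm_eq_abs, abs_of_pos (exp_pos _)]
      simp only [norm_one]
      calc exp (min 0 (-f x)) ≤ exp 0 := exp_le_exp.2 (min_le_left _ _)
        _ = 1 := exp_zero
    have hexpmax_int : Integrable (fun x => exp (max 0 (- f x))) ρ₀ := by
      refine ((integrable_const (1:ℝ)).add he_int).mono
        ((measurable_const.max hfmeas.neg).exp).aestronglyMeasurable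
        (Filter.Eventually.of_forall fun x => ?_)
      simp only [Pi.add_apply, Real.norm_eq_abs, abs_of_pos (exp_pos _)]
      rw [abs_of_pos (by positivity : (0:ℝ) < 1 + exp (- f x))]
      rcases le_total (-f x) 0 with h1 | h1
      · rw [max_eq_left h1, exp_zero]
        linarith [(exp_pos (-f x)).le]
      · rw [max_eq_right h1]
        linarith [exp_pos (-f x)]
    -- Jensen twice
    have hJ1 : exp (∫ x, min 0 (- f x) ∂ρ₀) ≤ ∫ x, exp (min 0 (- f x)) ∂ρ₀ := by
      have := convexOn_exp.map_average_le continuous_exp.continuousOn isClosed_univ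
        (Filter.Eventually.of_forall fun x => Set.mem_univ _) hmin_int hexpmin_int
      rwa [average_eq_integral, average_eq_integral] at this
    have hJ2 : exp (∫ x, max 0 (- f x) ∂ρ₀) ≤ ∫ x, exp (max 0 (- f x)) ∂ρ₀ := by
      have := convexOn_exp.map_average_le continuous_exp.continuousOn isClosed_univ
        (Filter.Eventually.of_forall fun x => Set.mem_univ _) hmax_int hexpmax_int
      rwa [average_eq_integral, average_eq_integral] at this
    -- ∫ exp(-f) ≤ M
    have he_le : ∫ x, exp (- f x) ∂ρ₀ ≤ M := by
      rw [integral_congr_ae he_ae, hM]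
      rw [Measure.integral_toReal_rnDeriv hμρ]
      exact le_rfl
    -- ∫ exp(max) ≤ 1 + M
    have hmax_le : ∫ x, exp (max 0 (- f x)) ∂ρ₀ ≤ 1 + M := by
      have hle : ∫ x, exp (max 0 (- f x)) ∂ρ₀ ≤ ∫ x, (1 + exp (- f x)) ∂ρ₀ := by
        refine integral_mono hexpmax_int ((integrable_const (1:ℝ)).add he_int) fun x => ?_
        rcases le_total (-f x) 0 with h1 | h1
        · rw [max_eq_left h1, exp_zero]; linarith [exp_pos (-f x)]
        · rw [max_eq_right h1]; linarith
      rw [integral_add (integrable_const _) he_int, integral_const] at hle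
      simp only [measure_univ, probReal_univ, ENNReal.toReal_one, smul_eq_mul, one_mul, mul_one] at hle
      linarith
    -- ∫ max ≤ log (1+M)
    have hmaxint_le : ∫ x, max 0 (- f x) ∂ρ₀ ≤ Real.log (1 + M) := by
      rw [← Real.exp_le_exp, Real.exp_log hC]
      exact hJ2.trans hmax_le
    -- min + max = -f
    have hsum : ∫ x, min 0 (- f x) ∂ρ₀ = (∫ x, (- f x) ∂ρ₀) - ∫ x, max 0 (- f x) ∂ρ₀ := by
      rw [eq_sub_iff_add_eq, ← integral_add hmin_int hmax_int]
      refine integral_congr_ae (Filter.Eventually.of_forall fun x => ?_)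
      have := min_add_max (0:ℝ) (-f x)
      simpa using this
    -- chain
    have hkey : (1 + M)⁻¹ * exp (- ∫ x, f x ∂ρ₀) ≤ ∫ x, exp (min 0 (- f x)) ∂ρ₀ := by
      have h1 : (1 + M)⁻¹ * exp (- ∫ x, f x ∂ρ₀) = exp (- ∫ x, f x ∂ρ₀ - Real.log (1 + M)) := by
        rw [Real.exp_sub, Real.exp_log hC, div_eq_inv_mul]
      rw [h1]
      refine le_trans ?_ hJ1
      apply Real.exp_le_exp.2
      rw [hsum, integral_neg]
      linarith
    -- split the integral over A and Aᶜ
    have hsplit : ∫ x, exp (min 0 (- f x)) ∂ρ₀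
        = (∫ x in A, exp (min 0 (- f x)) ∂ρ₀) + ∫ x in Aᶜ, exp (min 0 (- f x)) ∂ρ₀ := by
      rw [← integral_add_compl hA hexpmin_int]
    have hA_le : ∫ x in A, exp (min 0 (- f x)) ∂ρ₀ ≤ (ρ₀ A).toReal := by
      have : ∫ x in A, exp (min 0 (- f x)) ∂ρ₀ ≤ ∫ _ in A, (1:ℝ) ∂ρ₀ := by
        refine setIntegral_mono_on hexpmin_int.integrableOn (integrable_const _).integrableOn hA
          fun x _ => ?_
        calc exp (min 0 (-f x)) ≤ exp 0 := exp_le_exp.2 (min_le_left _ _)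
          _ = 1 := exp_zero
      simpa [Measure.restrict_apply_univ, Measure.real] using this
    have hAc_le : ∫ x in Aᶜ, exp (min 0 (- f x)) ∂ρ₀ ≤ (μ Aᶜ).toReal := by
      have h1 : ∫ x in Aᶜ, exp (min 0 (- f x)) ∂ρ₀ ≤ ∫ x in Aᶜ, exp (- f x) ∂ρ₀ := by
        refine setIntegral_mono_on hexpmin_int.integrableOn he_int.integrableOn hA.compl
          fun x _ => exp_le_exp.2 (min_le_right _ _)
      have h2 : ∫ x in Aᶜ, exp (- f x) ∂ρ₀ = (μ Aᶜ).toReal := by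
        rw [setIntegral_congr_ae hA.compl (he_ae.mono fun x hx _ => hx)]
        exact Measure.setIntegral_toReal_rnDeriv hμρ Aᶜ
      linarith
    linarith
  · rw [klDiv, if_neg h, expNeg, if_pos rfl, mul_zero]
    positivity

/-- **Lower bound for a composite, rescaled testing risk (Lemma 7).**
Let `ρ₀` be a probability measure on `X` and, for each `Δ ∈ ℝ`, let `ρ_Δ` be a probability
measure on `X` absolutely continuous with respect to `ρ₀`.  Let `λ` be a finite positive
measure on `ℝ` (supported on the nonnegative reals), set `ρ̄ = ∫ Δ ρ_Δ dλ(Δ)` and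
`C_λ = 1 + ∫ Δ dλ(Δ)`.  Then for any measurable `ψ : X → {0,1}`,
`ρ₀(ψ = 1) + ∫ Δ ρ_Δ(ψ = 0) dλ(Δ) ≥ (1/C_λ) exp (−KL(ρ₀, ρ̄))`. -/
theorem composite_test_errors_ge_inv_C_exp_neg_kl
    {X : Type*} [MeasurableSpace X] (ρ₀ : Measure X) [IsProbabilityMeasure ρ₀]
    (ρ : ℝ → Measure X) (hρmeas : Measurable ρ)
    (hρprob : ∀ Δ : ℝ, IsProbabilityMeasure (ρ Δ))
    (hρac : ∀ Δ : ℝ, ρ Δ ≪ ρ₀)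
    (lam : Measure ℝ) [IsFiniteMeasure lam] (hsupp : lam (Set.Iio 0) = 0)
    (hlamint : Integrable (fun Δ : ℝ => Δ) lam)
    (ψ : X → Fin 2) (hψ : Measurable ψ) :
    (ρ₀ {x | ψ x = 1}).toReal + ∫ Δ, Δ * ((ρ Δ) {x | ψ x = 0}).toReal ∂lam
      ≥ (1 + ∫ Δ, Δ ∂lam)⁻¹ * expNeg (klDiv ρ₀ (mixMeasure lam ρ)) := by

  set μ := mixMeasure lam ρ with hμ
  have hnn : ∀ᵐ Δ ∂lam, 0 ≤ Δ := by
    rw [ae_iff]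
    convert hsupp using 2
    ext Δ; simp [Set.Iio, not_le]
  -- formula for μ on measurable sets
  have hμs : ∀ s : Set X, MeasurableSet s →
      μ s = ∫⁻ Δ, ENNReal.ofReal Δ * ρ Δ s ∂lam := by
    intro s hs
    have hg : Measurable fun Δ => ρ Δ s := (Measure.measurable_coe hs).comp hρmeas
    rw [hμ, mixMeasure, Measure.bind_apply hs hρmeas.aemeasurable,
      lintegral_withDensity_eq_lintegral_mul _ ENNReal.measurable_ofReal hg]
    simp [Pi.mul_apply]
  -- toReal formula
  have hμtr : ∀ s : Set X, MeasurableSet s →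
      (μ s).toReal = ∫ Δ, Δ * ((ρ Δ) s).toReal ∂lam := by
    intro s hs
    have hmeas : Measurable fun Δ => Δ * ((ρ Δ) s).toReal :=
      measurable_id.mul ((Measure.measurable_coe hs).comp hρmeas).ennreal_toReal
    have hint : Integrable (fun Δ => Δ * ((ρ Δ) s).toReal) lam := by
      refine hlamint.mono hmeas.aestronglyMeasurable (Filter.Eventually.of_forall fun Δ => ?_)
      simp only [Real.norm_eq_abs, abs_mul]
      have h1 : ((ρ Δ) s).toReal ≤ 1 := by
        haveI := hρprob Δ
        exact ENNReal.toReal_le_of_le_ofReal zero_le_one (by simpa using prob_le_one)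
      calc |Δ| * |((ρ Δ) s).toReal| = |Δ| * ((ρ Δ) s).toReal := by
            rw [abs_of_nonneg ENNReal.toReal_nonneg]
        _ ≤ |Δ| * 1 := by
            exact mul_le_mul_of_nonneg_left h1 (abs_nonneg _)
        _ = |Δ| := mul_one _
    have hnn2 : 0 ≤ᵐ[lam] fun Δ => Δ * ((ρ Δ) s).toReal := by
      filter_upwards [hnn] with Δ hΔ
      exact mul_nonneg hΔ ENNReal.toReal_nonneg
    have h1 : ENNReal.ofReal (∫ Δ, Δ * ((ρ Δ) s).toReal ∂lam)
        = ∫⁻ Δ, ENNReal.ofReal (Δ * ((ρ Δ) s).toReal) ∂lam :=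
      ofReal_integral_eq_lintegral_ofReal hint hnn2
    have h2 : ∫⁻ Δ, ENNReal.ofReal (Δ * ((ρ Δ) s).toReal) ∂lam
        = ∫⁻ Δ, ENNReal.ofReal Δ * ρ Δ s ∂lam := by
      refine lintegral_congr_ae ?_
      filter_upwards [hnn] with Δ hΔ
      rw [ENNReal.ofReal_mul hΔ, ENNReal.ofReal_toReal (measure_ne_top _ _)]
    rw [hμs s hs, ← h2, ← h1, ENNReal.toReal_ofReal (integral_nonneg_of_ae hnn2)]
  -- finiteness and total mass
  have hμuniv : (μ Set.univ).toReal = ∫ Δ, Δ ∂lam := by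
    rw [hμtr Set.univ MeasurableSet.univ]
    refine integral_congr_ae (Filter.Eventually.of_forall fun Δ => ?_)
    haveI := hρprob Δ
    simp
  have hfin : IsFiniteMeasure μ := by
    constructor
    rw [hμs Set.univ MeasurableSet.univ]
    have : ∫⁻ Δ, ENNReal.ofReal Δ * ρ Δ Set.univ ∂lam = ∫⁻ Δ, ENNReal.ofReal Δ ∂lam := by
      refine lintegral_congr fun Δ => ?_
      haveI := hρprob Δ
      simp
    rw [this, ← ofReal_integral_eq_lintegral_ofReal hlamint hnn]
    exact ENNReal.ofReal_lt_top
  have hμac : μ ≪ ρ₀ := by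
    refine Measure.AbsolutelyContinuous.mk fun s hs hs0 => ?_
    rw [hμs s hs]
    have : ∀ Δ : ℝ, ENNReal.ofReal Δ * ρ Δ s = 0 := fun Δ => by
      rw [hρac Δ hs0, mul_zero]
    simp [this]
  haveI := hfin
  set A : Set X := {x | ψ x = 1} with hAdef
  have hA : MeasurableSet A := hψ (measurableSet_singleton 1)
  have hcompl : {x | ψ x = 0} = Aᶜ := by
    ext x
    have : ∀ a : Fin 2, a = 0 ↔ ¬ a = 1 := by decide
    simpa [hAdef] using this (ψ x)
  rw [ge_iff_le, hcompl, ← hμtr Aᶜ hA.compl, ← hμuniv]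
  exact aux_test ρ₀ μ hμac A hA
end

section
/- Consider the two-armed stochastic bandit problem. Let Δ ∈ (0, 1], let ν = N(0,1) ⊗ N(−Δ,1) (arm 1 has mean 0, arm 2 has mean −Δ) and ν′ = N(−Δ,1) ⊗ N(0,1). Then for any policy and every n ≥ 1 with n ≥ 1/Δ², max( R_n(ν), R_n(ν′) ) ≥ 1/(4Δ). -/
open MeasureTheory ProbabilityTheory Real

set_option linter.unusedSectionVars false
set_option maxHeartbeats 1000000

open scoped ENNReal NNReal


/-- `IsBanditRun X κ ν Q` states that, under the probability measure `Q`, the process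
`X t = (arm pulled at round t, reward observed at round t)` (rounds `t = 0, 1, 2, …`) is a
run of the policy given by the Markov kernels `κ t` (from histories of length `t` to arms)
on the two-armed bandit instance whose arm `i` has reward distribution `ν i`: conditionally
on the history, the arm `I_t` is drawn according to `κ t` and, conditionally on the history
and `I_t = i`, the reward is drawn according to `ν i`. -/
def IsBanditRun {Ω : Type*} [MeasurableSpace Ω] (X : ℕ → Ω → Fin 2 × ℝ)
    (κ : (t : ℕ) → Kernel (Fin t → Fin 2 × ℝ) (Fin 2))
    (ν : Fin 2 → Measure ℝ) (Q : Measure Ω) : Prop :=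
  (∀ t, Measurable (X t)) ∧
    ∀ (t : ℕ) (A : Set (Fin t → Fin 2 × ℝ)), MeasurableSet A →
      ∀ (i : Fin 2) (B : Set ℝ), MeasurableSet B →
        Q {ω | (fun ℓ : Fin t => X ℓ.val ω) ∈ A ∧ (X t ω).1 = i ∧ (X t ω).2 ∈ B}
          = ∫⁻ h in A, κ t h {i} * ν i B ∂(Q.map fun ω (ℓ : Fin t) => X ℓ.val ω)

/-- The cumulative regret at horizon `n` of the run `X` under the measure `Q`, for a
two-armed instance whose arms have means `m 0` and `m 1`:
`R_n = n·max(m 0, m 1) − ∑_{t<n} E[m (I_t)]`. -/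
noncomputable def banditRegret {Ω : Type*} [MeasurableSpace Ω] (X : ℕ → Ω → Fin 2 × ℝ)
    (n : ℕ) (m : Fin 2 → ℝ) (Q : Measure Ω) : ℝ :=
  n * max (m 0) (m 1) - ∑ t ∈ Finset.range n, ∫ ω, m ((X t ω).1) ∂Q

namespace BanditLB

variable {Ω : Type*} [MeasurableSpace Ω]

def hist (X : ℕ → Ω → Fin 2 × ℝ) (t : ℕ) (ω : Ω) : Fin t → Fin 2 × ℝ := fun ℓ => X ℓ.val ω

lemma measurable_hist {X : ℕ → Ω → Fin 2 × ℝ} (hX : ∀ t, Measurable (X t)) (t : ℕ) :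
    Measurable (hist X t) :=
  measurable_pi_lambda _ fun ℓ => hX ℓ.val

lemma measurable_snoc (t : ℕ) :
    Measurable (fun p : (Fin t → Fin 2 × ℝ) × (Fin 2 × ℝ) =>
      (Fin.snoc p.1 p.2 : Fin (t+1) → Fin 2 × ℝ)) := by
  refine measurable_pi_lambda _ fun ℓ => ?_
  refine Fin.lastCases ?_ ?_ ℓ
  · simp only [Fin.snoc_last]; exact measurable_snd
  · intro j; simp only [Fin.snoc_castSucc]
    exact (measurable_pi_apply j).comp measurable_fst

lemma hist_succ (X : ℕ → Ω → Fin 2 × ℝ) (t : ℕ) (ω : Ω) :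
    hist X (t+1) ω = Fin.snoc (hist X t ω) (X t ω) := by
  funext ℓ
  refine Fin.lastCases ?_ ?_ ℓ
  · simp [hist, Fin.snoc_last]
  · intro j; simp [hist, Fin.snoc_castSucc]

/-- The key one-step disintegration of the law of the history. -/
lemma step {X : ℕ → Ω → Fin 2 × ℝ} {κ : (t : ℕ) → Kernel (Fin t → Fin 2 × ℝ) (Fin 2)}
    [∀ t, IsMarkovKernel (κ t)] {ν : Fin 2 → Measure ℝ} [∀ i, IsProbabilityMeasure (ν i)]
    {Q : Measure Ω} [IsProbabilityMeasure Q] (hQ : IsBanditRun X κ ν Q) (t : ℕ)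
    {F : (Fin (t+1) → Fin 2 × ℝ) → ℝ≥0∞} (hF : Measurable F) :
    ∫⁻ h, F h ∂(Q.map (hist X (t+1)))
      = ∫⁻ h, ∑ i, κ t h {i} * ∫⁻ x, F (Fin.snoc h (i, x)) ∂(ν i)
          ∂(Q.map (hist X t)) := by
  obtain ⟨hX, hlaw⟩ := hQ
  have hhist : ∀ s, Measurable (hist X s) := measurable_hist hX
  set μt := Q.map (hist X t) with hμt
  haveI : IsProbabilityMeasure μt := Measure.isProbabilityMeasure_map (hhist t).aemeasurable
  have key : ∀ (A : Set (Fin t → Fin 2 × ℝ)), MeasurableSet A →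
      ∀ (i : Fin 2) (Ti : Set ℝ), MeasurableSet Ti →
      Q {ω | hist X t ω ∈ A ∧ (X t ω).1 = i ∧ (X t ω).2 ∈ Ti}
        = ∫⁻ h in A, κ t h {i} * ν i Ti ∂μt :=
    fun A hA i Ti hTi => hlaw t A hA i Ti hTi
  set νk : Kernel (Fin 2) ℝ := Kernel.ofFunOfCountable ν with hνk
  have hνk_app : ∀ i, νk i = ν i := fun i => rfl
  haveI : IsMarkovKernel νk := ⟨fun i => by rw [hνk_app]; infer_instance⟩
  set η : Kernel (Fin t → Fin 2 × ℝ) (Fin 2 × ℝ) :=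
    κ t ⊗ₖ Kernel.prodMkLeft _ νk with hη
  have hpair : Measurable (fun ω => (hist X t ω, X t ω)) := (hhist t).prodMk (hX t)
  haveI : IsProbabilityMeasure (Q.map (fun ω => (hist X t ω, X t ω))) :=
    Measure.isProbabilityMeasure_map hpair.aemeasurable
  -- claim 1 : the law of (history, current round) is μt ⊗ₘ η
  have claim1 : Q.map (fun ω => (hist X t ω, X t ω)) = μt ⊗ₘ η := by
    refine ext_of_generate_finite _ generateFrom_prod.symm isPiSystem_prod ?_ (by simp)
    rintro s ⟨A, hA, T, hT, rfl⟩
    simp only [Set.mem_setOf_eq] at hA hT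
    have hT0 : MeasurableSet ((fun x => ((0 : Fin 2), x)) ⁻¹' T) := measurable_prodMk_left hT
    have hT1 : MeasurableSet ((fun x => ((1 : Fin 2), x)) ⁻¹' T) := measurable_prodMk_left hT
    have hpre : (fun ω => (hist X t ω, X t ω)) ⁻¹' (A ×ˢ T)
        = {ω | hist X t ω ∈ A ∧ (X t ω).1 = 0 ∧ (X t ω).2 ∈ (fun x => ((0:Fin 2), x)) ⁻¹' T}
          ∪ {ω | hist X t ω ∈ A ∧ (X t ω).1 = 1 ∧ (X t ω).2 ∈ (fun x => ((1:Fin 2), x)) ⁻¹' T} := by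
      ext ω
      have h2 : (X t ω).1 = 0 ∨ (X t ω).1 = 1 := by omega
      simp only [Set.mem_preimage, Set.mem_prod, Set.mem_union, Set.mem_setOf_eq]
      constructor
      · rintro ⟨hA', hT'⟩
        rcases h2 with h | h
        · exact Or.inl ⟨hA', h, by rw [← h]; simpa using hT'⟩
        · exact Or.inr ⟨hA', h, by rw [← h]; simpa using hT'⟩
      · rintro (⟨hA', h, hT'⟩ | ⟨hA', h, hT'⟩) <;>
          · rw [← h] at hT'; exact ⟨hA', by simpa using hT'⟩
    have hdisj : Disjoint
        {ω | hist X t ω ∈ A ∧ (X t ω).1 = 0 ∧ (X t ω).2 ∈ (fun x => ((0:Fin 2), x)) ⁻¹' T}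
        {ω | hist X t ω ∈ A ∧ (X t ω).1 = 1 ∧ (X t ω).2 ∈ (fun x => ((1:Fin 2), x)) ⁻¹' T} := by
      rw [Set.disjoint_left]
      rintro ω ⟨-, h0, -⟩ ⟨-, h1, -⟩
      rw [h0] at h1; exact absurd h1 (by decide)
    have hmeas1 : MeasurableSet
        {ω | hist X t ω ∈ A ∧ (X t ω).1 = 1 ∧ (X t ω).2 ∈ (fun x => ((1:Fin 2), x)) ⁻¹' T} := by
      refine ((hhist t) hA).inter ?_
      exact (((hX t).fst (measurableSet_singleton _))).inter ((hX t).snd hT1)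
    rw [Measure.map_apply hpair (hA.prod hT), hpre, measure_union hdisj hmeas1,
      key A hA 0 _ hT0, key A hA 1 _ hT1]
    rw [Measure.compProd_apply_prod hA hT]
    have hη_app : ∀ h : Fin t → Fin 2 × ℝ,
        η h T = κ t h {0} * ν 0 ((fun x => ((0:Fin 2), x)) ⁻¹' T)
          + κ t h {1} * ν 1 ((fun x => ((1:Fin 2), x)) ⁻¹' T) := by
      intro h
      rw [hη, Kernel.compProd_apply hT, lintegral_fintype]
      simp only [Kernel.prodMkLeft_apply, hνk_app]
      rw [Fin.sum_univ_two, mul_comm, mul_comm (ν 1 _)]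
    calc ∫⁻ h in A, κ t h {0} * ν 0 ((fun x => ((0:Fin 2), x)) ⁻¹' T) ∂μt
          + ∫⁻ h in A, κ t h {1} * ν 1 ((fun x => ((1:Fin 2), x)) ⁻¹' T) ∂μt
        = ∫⁻ h in A, (κ t h {0} * ν 0 ((fun x => ((0:Fin 2), x)) ⁻¹' T)
            + κ t h {1} * ν 1 ((fun x => ((1:Fin 2), x)) ⁻¹' T)) ∂μt := by
          rw [lintegral_add_left ((Kernel.measurable_coe _ (measurableSet_singleton _)).mul_const _)]
      _ = ∫⁻ h in A, η h T ∂μt := by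
          refine lintegral_congr fun h => (hη_app h).symm
  -- claim 2 : the law of the history at time t+1
  have claim2 : Q.map (hist X (t+1))
      = (Q.map (fun ω => (hist X t ω, X t ω))).map (fun p => Fin.snoc p.1 p.2) := by
    rw [Measure.map_map (measurable_snoc t) hpair]
    congr 1
    funext ω
    exact hist_succ X t ω
  rw [claim2, claim1, lintegral_map hF (measurable_snoc t),
    Measure.lintegral_compProd (f := fun p => F (Fin.snoc p.1 p.2)) (hF.comp (measurable_snoc t))]
  refine lintegral_congr fun h => ?_
  rw [hη, Kernel.lintegral_compProd]
  · rw [lintegral_fintype]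
    refine Finset.sum_congr rfl fun i _ => ?_
    rw [mul_comm]
    congr 1
  · exact hF.comp ((measurable_snoc t).comp (measurable_const.prodMk measurable_id))

/-- likelihood ratio of `N(b,1)` against `N(a,1)` -/
noncomputable def ratio (a b x : ℝ) : ℝ := rexp ((b - a) * x + (a^2 - b^2)/2)

lemma ratio_pos (a b x : ℝ) : 0 < ratio a b x := exp_pos _

lemma measurable_ratio (a b : ℝ) : Measurable (ratio a b) := by
  unfold ratio; fun_prop

lemma gaussianPDFReal_ratio (a b x : ℝ) :
    gaussianPDFReal b 1 x = ratio a b x * gaussianPDFReal a 1 x := by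
  simp only [gaussianPDFReal, ratio, NNReal.coe_one, mul_one]
  rw [mul_comm (rexp _) _, mul_assoc, ← Real.exp_add]
  congr 1
  ring

lemma sqrt_ratio_pdf (a b x : ℝ) :
    rexp (((b - a) * x + (a^2 - b^2)/2)/2) * gaussianPDFReal a 1 x
      = rexp (-(b-a)^2/8) * gaussianPDFReal ((a+b)/2) 1 x := by
  simp only [gaussianPDFReal, NNReal.coe_one, mul_one]
  rw [mul_comm (rexp _) ((√(2 * π))⁻¹ * _), mul_comm (rexp _) ((√(2 * π))⁻¹ * _),
    mul_assoc, mul_assoc, ← Real.exp_add, ← Real.exp_add]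
  congr 2
  ring

lemma gaussian_withDensity (a b : ℝ) :
    gaussianReal b 1 = (gaussianReal a 1).withDensity
      (fun x => ENNReal.ofReal (ratio a b x)) := by
  rw [gaussianReal_of_var_ne_zero _ one_ne_zero, gaussianReal_of_var_ne_zero _ one_ne_zero,
    ← withDensity_mul _ (measurable_gaussianPDF a 1)
      ((measurable_ratio a b).ennreal_ofReal)]
  congr 1
  funext x
  simp only [Pi.mul_apply, gaussianPDF]
  rw [← ENNReal.ofReal_mul (gaussianPDFReal_nonneg a 1 x), mul_comm]
  exact congrArg ENNReal.ofReal (gaussianPDFReal_ratio a b x)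

lemma lintegral_gaussian_ratio (a b : ℝ) {G : ℝ → ℝ≥0∞} (hG : Measurable G) :
    ∫⁻ x, G x ∂(gaussianReal b 1)
      = ∫⁻ x, ENNReal.ofReal (ratio a b x) * G x ∂(gaussianReal a 1) := by
  rw [gaussian_withDensity a b,
    lintegral_withDensity_eq_lintegral_mul _ ((measurable_ratio a b).ennreal_ofReal) hG]
  rfl

lemma lintegral_sqrt_ratio (a b : ℝ) :
    ∫⁻ x, ENNReal.ofReal (rexp (((b - a) * x + (a^2 - b^2)/2)/2)) ∂(gaussianReal a 1)
      = ENNReal.ofReal (rexp (-(b-a)^2/8)) := by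
  rw [gaussianReal_of_var_ne_zero _ one_ne_zero,
    lintegral_withDensity_eq_lintegral_mul _ (measurable_gaussianPDF a 1) (by fun_prop)]
  have : ∀ x : ℝ, (gaussianPDF a 1 * fun x =>
      ENNReal.ofReal (rexp (((b - a) * x + (a^2 - b^2)/2)/2))) x
      = ENNReal.ofReal (rexp (-(b-a)^2/8)) * gaussianPDF ((a+b)/2) 1 x := by
    intro x
    simp only [Pi.mul_apply, gaussianPDF]
    rw [← ENNReal.ofReal_mul (gaussianPDFReal_nonneg a 1 x),
      ← ENNReal.ofReal_mul (exp_nonneg _)]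
    rw [mul_comm (gaussianPDFReal a 1 x)]
    exact congrArg ENNReal.ofReal (sqrt_ratio_pdf a b x)
  rw [lintegral_congr this, lintegral_const_mul _ (measurable_gaussianPDF _ 1),
    lintegral_gaussianPDF_eq_one _ one_ne_zero, mul_one]

/-! ### pointwise truncated-subtraction identities in `ℝ≥0∞` -/

lemma nn_k2 (s : ℝ≥0) : ((1-s)+(s-1))*((1-s)+(s-1)) + 2*s = 1 + s*s := by
  rcases le_total s 1 with h | h
  · rw [tsub_eq_zero_of_le h, add_zero]
    apply NNReal.coe_injective
    push_cast [NNReal.coe_sub h]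
    ring
  · rw [tsub_eq_zero_of_le h, zero_add]
    apply NNReal.coe_injective
    push_cast [NNReal.coe_sub h]
    ring

lemma nn_k3 (s : ℝ≥0) : ((1-s)+(s-1))*(1+s) = (1-s*s)+(s*s-1) := by
  rcases le_total s 1 with h | h
  · have h2 : s*s ≤ 1 := by calc s*s ≤ 1*1 := mul_le_mul' h h
                                _ = 1 := one_mul 1
    rw [tsub_eq_zero_of_le h, tsub_eq_zero_of_le h2, add_zero, add_zero]
    apply NNReal.coe_injective
    push_cast [NNReal.coe_sub h, NNReal.coe_sub h2]
    ring
  · have h2 : 1 ≤ s*s := by calc (1:ℝ≥0) = 1*1 := (one_mul 1).symm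
                                _ ≤ s*s := mul_le_mul' h h
    rw [tsub_eq_zero_of_le h, tsub_eq_zero_of_le h2, zero_add, zero_add]
    apply NNReal.coe_injective
    push_cast [NNReal.coe_sub h, NNReal.coe_sub h2]
    ring

lemma nn_k4 (a : ℝ≥0) (ha : a ≤ 2) : (2-a)*(2+a) + a*a = 4 := by
  apply NNReal.coe_injective
  push_cast [NNReal.coe_sub ha]
  ring

lemma en_k2 {s : ℝ≥0∞} (hs : s ≠ ∞) :
    ((1-s)+(s-1))*((1-s)+(s-1)) + 2*s = 1 + s*s := by
  lift s to ℝ≥0 using hs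
  rw [show ((2:ℝ≥0∞)) = ((2:ℝ≥0):ℝ≥0∞) by norm_cast, ← ENNReal.coe_one, ← ENNReal.coe_sub,
    ← ENNReal.coe_sub, ← ENNReal.coe_add, ← ENNReal.coe_mul, ← ENNReal.coe_mul,
    ← ENNReal.coe_add, ← ENNReal.coe_mul, ← ENNReal.coe_add, ENNReal.coe_inj]
  exact nn_k2 s

lemma en_k3 {s : ℝ≥0∞} (hs : s ≠ ∞) :
    ((1-s)+(s-1))*(1+s) = (1-s*s)+(s*s-1) := by
  lift s to ℝ≥0 using hs
  rw [← ENNReal.coe_one, ← ENNReal.coe_sub, ← ENNReal.coe_sub, ← ENNReal.coe_add,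
    ← ENNReal.coe_add, ← ENNReal.coe_mul, ← ENNReal.coe_mul, ← ENNReal.coe_sub,
    ← ENNReal.coe_sub, ← ENNReal.coe_add, ENNReal.coe_inj]
  exact nn_k3 s

lemma en_k4 {a : ℝ≥0∞} (ha : a ≤ 2) : (2-a)*(2+a) + a*a = 4 := by
  have ha' : a ≠ ∞ := (lt_of_le_of_lt ha (by norm_num)).ne
  lift a to ℝ≥0 using ha'
  rw [show ((2:ℝ≥0∞)) = ((2:ℝ≥0):ℝ≥0∞) by norm_cast, show ((4:ℝ≥0∞)) = ((4:ℝ≥0):ℝ≥0∞) by norm_cast,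
    ← ENNReal.coe_sub, ← ENNReal.coe_add, ← ENNReal.coe_mul, ← ENNReal.coe_mul,
    ← ENNReal.coe_add, ENNReal.coe_inj]
  exact nn_k4 a (by exact_mod_cast ha)

lemma en_one_sub_add_min (L : ℝ≥0∞) : (1 - L) + (L ⊓ 1) = 1 := by
  rcases le_total L 1 with h | h
  · rw [min_eq_left h, tsub_add_cancel_of_le h]
  · rw [min_eq_right h, tsub_eq_zero_of_le h, zero_add]

lemma en_sub_one_add_min (L : ℝ≥0∞) : (L - 1) + (L ⊓ 1) = L := by
  rcases le_total L 1 with h | h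
  · rw [min_eq_left h, tsub_eq_zero_of_le h, zero_add]
  · rw [min_eq_right h, tsub_add_cancel_of_le h]

/-! ### The likelihood-ratio process -/

/-- density ratio `dν'ᵢ/dνᵢ` where `ν = (N(0,1), N(-Δ,1))` and `ν' = (N(-Δ,1), N(0,1))`. -/
noncomputable def g (Δ : ℝ) (p : Fin 2 × ℝ) : ℝ≥0∞ :=
  ENNReal.ofReal (if p.1 = 0 then ratio 0 (-Δ) p.2 else ratio (-Δ) 0 p.2)

/-- pointwise square root of `g`. -/
noncomputable def sq (Δ : ℝ) (p : Fin 2 × ℝ) : ℝ≥0∞ :=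
  ENNReal.ofReal (if p.1 = 0 then rexp ((((-Δ) - 0) * p.2 + (0^2 - (-Δ)^2)/2)/2)
    else rexp (((0 - (-Δ)) * p.2 + ((-Δ)^2 - 0^2)/2)/2))

lemma measurable_g (Δ : ℝ) : Measurable (g Δ) := by
  unfold g
  refine Measurable.ennreal_ofReal ?_
  refine Measurable.ite ?_ ?_ ?_
  · exact measurable_fst (measurableSet_singleton (0 : Fin 2))
  · exact (measurable_ratio 0 (-Δ)).comp measurable_snd
  · exact (measurable_ratio (-Δ) 0).comp measurable_snd

lemma measurable_sq (Δ : ℝ) : Measurable (sq Δ) := by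
  unfold sq
  refine Measurable.ennreal_ofReal ?_
  refine Measurable.ite ?_ ?_ ?_
  · exact measurable_fst (measurableSet_singleton (0 : Fin 2))
  · fun_prop
  · fun_prop

lemma sq_mul_sq (Δ : ℝ) (p : Fin 2 × ℝ) : sq Δ p * sq Δ p = g Δ p := by
  unfold sq g ratio
  rw [← ENNReal.ofReal_mul (by positivity)]
  congr 1
  by_cases h : p.1 = 0 <;> simp only [h, if_true, if_false, ← Real.exp_add, add_halves] <;> norm_num

lemma g_ne_top (Δ : ℝ) (p : Fin 2 × ℝ) : g Δ p ≠ ∞ := ENNReal.ofReal_ne_top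
lemma sq_ne_top (Δ : ℝ) (p : Fin 2 × ℝ) : sq Δ p ≠ ∞ := ENNReal.ofReal_ne_top

/-- the likelihood-ratio process. -/
noncomputable def LR (Δ : ℝ) {t : ℕ} (h : Fin t → Fin 2 × ℝ) : ℝ≥0∞ := ∏ ℓ, g Δ (h ℓ)

/-- its pointwise square root. -/
noncomputable def SR (Δ : ℝ) {t : ℕ} (h : Fin t → Fin 2 × ℝ) : ℝ≥0∞ := ∏ ℓ, sq Δ (h ℓ)

lemma measurable_LR (Δ : ℝ) (t : ℕ) : Measurable (LR Δ (t := t)) :=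
  Finset.measurable_prod _ fun ℓ _ => (measurable_g Δ).comp (measurable_pi_apply ℓ)

lemma measurable_SR (Δ : ℝ) (t : ℕ) : Measurable (SR Δ (t := t)) :=
  Finset.measurable_prod _ fun ℓ _ => (measurable_sq Δ).comp (measurable_pi_apply ℓ)

lemma LR_ne_top (Δ : ℝ) {t : ℕ} (h : Fin t → Fin 2 × ℝ) : LR Δ h ≠ ∞ := by
  refine (ENNReal.prod_lt_top ?_).ne
  exact fun ℓ _ => (g_ne_top Δ (h ℓ)).lt_top

lemma SR_ne_top (Δ : ℝ) {t : ℕ} (h : Fin t → Fin 2 × ℝ) : SR Δ h ≠ ∞ := by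
  refine (ENNReal.prod_lt_top ?_).ne
  exact fun ℓ _ => (sq_ne_top Δ (h ℓ)).lt_top

lemma SR_mul_SR (Δ : ℝ) {t : ℕ} (h : Fin t → Fin 2 × ℝ) : SR Δ h * SR Δ h = LR Δ h := by
  rw [SR, ← Finset.prod_mul_distrib]
  exact Finset.prod_congr rfl fun ℓ _ => sq_mul_sq Δ (h ℓ)

lemma LR_snoc (Δ : ℝ) {t : ℕ} (h : Fin t → Fin 2 × ℝ) (y : Fin 2 × ℝ) :
    LR Δ (Fin.snoc h y) = LR Δ h * g Δ y := by
  rw [LR, Fin.prod_univ_castSucc]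
  simp [Fin.snoc_castSucc, Fin.snoc_last, LR]

lemma SR_snoc (Δ : ℝ) {t : ℕ} (h : Fin t → Fin 2 × ℝ) (y : Fin 2 × ℝ) :
    SR Δ (Fin.snoc h y) = SR Δ h * sq Δ y := by
  rw [SR, Fin.prod_univ_castSucc]
  simp [Fin.snoc_castSucc, Fin.snoc_last, SR]

/-! ### per-coordinate integral identities -/

section instanceNu

variable (Δ : ℝ)

lemma nu_prob : ∀ i : Fin 2, IsProbabilityMeasure
    ((fun i : Fin 2 => if i = 0 then gaussianReal 0 1 else gaussianReal (-Δ) 1) i) := by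
  intro i; by_cases h : i = 0 <;> simp only [h, if_true, if_false] <;> infer_instance

lemma nu'_prob : ∀ i : Fin 2, IsProbabilityMeasure
    ((fun i : Fin 2 => if i = 0 then gaussianReal (-Δ) 1 else gaussianReal 0 1) i) := by
  intro i; by_cases h : i = 0 <;> simp only [h, if_true, if_false] <;> infer_instance

/-- change of measure for a single coordinate -/
lemma coord_change (i : Fin 2) {G : ℝ → ℝ≥0∞} (hG : Measurable G) :
    ∫⁻ x, G x ∂((fun i : Fin 2 => if i = 0 then gaussianReal (-Δ) 1 else gaussianReal 0 1) i)
      = ∫⁻ x, g Δ (i, x) * G x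
          ∂((fun i : Fin 2 => if i = 0 then gaussianReal 0 1 else gaussianReal (-Δ) 1) i) := by
  by_cases h : i = 0
  · simp only [h, if_true, g]
    exact lintegral_gaussian_ratio 0 (-Δ) hG
  · simp only [h, if_false, g]
    exact lintegral_gaussian_ratio (-Δ) 0 hG

/-- Hellinger-affinity computation for a single coordinate -/
lemma coord_sq (i : Fin 2) :
    ∫⁻ x, sq Δ (i, x)
        ∂((fun i : Fin 2 => if i = 0 then gaussianReal 0 1 else gaussianReal (-Δ) 1) i)
      = ENNReal.ofReal (rexp (-(Δ^2)/8)) := by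
  by_cases h : i = 0
  · simp only [h, if_true, sq]
    rw [lintegral_sqrt_ratio 0 (-Δ)]
    norm_num
  · simp only [h, if_false, sq]
    rw [lintegral_sqrt_ratio (-Δ) 0]
    norm_num

end instanceNu

/-- The abstract Bretagnolle–Huber-type bound via Cauchy-Schwarz and Hellinger affinity. -/
lemma abstract_bound {α : Type*} [MeasurableSpace α] (μ : Measure α) [IsProbabilityMeasure μ]
    (Lf Sf : α → ℝ≥0∞) (hLm : Measurable Lf) (hSm : Measurable Sf)
    (hSS : ∀ a, Sf a * Sf a = Lf a) (hStop : ∀ a, Sf a ≠ ∞)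
    (k0 k1 : α → ℝ≥0∞) (hk0 : Measurable k0) (hk1 : Measurable k1)
    (hksum : ∀ a, k0 a + k1 a = 1)
    (hEL : ∫⁻ a, Lf a ∂μ = 1) {A : ℝ≥0∞} (hA : ∫⁻ a, Sf a ∂μ = A) (hA1 : A ≤ 1)
    {c : ℝ≥0∞} (hc : (2 - 2*A) * (2 + 2*A) ≤ c * c) :
    1 ≤ (∫⁻ a, k1 a ∂μ) + (∫⁻ a, k0 a * Lf a ∂μ) + c / 2 := by
  have hAtop : A ≠ ∞ := (lt_of_le_of_lt hA1 (by norm_num)).ne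
  set u : α → ℝ≥0∞ := fun a => (1 - Sf a) + (Sf a - 1) with hu
  set v : α → ℝ≥0∞ := fun a => 1 + Sf a with hv
  have hum : Measurable u := (measurable_const.sub hSm).add (hSm.sub measurable_const)
  have hvm : Measurable v := measurable_const.add hSm
  set D := ∫⁻ a, (1 - Lf a) ∂μ with hD
  -- step 1 : ∫ (Lf - 1) = D
  have hEmin_le : ∫⁻ a, (Lf a ⊓ 1) ∂μ ≤ 1 := by
    calc ∫⁻ a, (Lf a ⊓ 1) ∂μ ≤ ∫⁻ _, 1 ∂μ := lintegral_mono fun a => min_le_right _ _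
      _ = 1 := by simp
  have hEmin_top : ∫⁻ a, (Lf a ⊓ 1) ∂μ ≠ ∞ := (lt_of_le_of_lt hEmin_le (by norm_num)).ne
  have h1 : D + ∫⁻ a, (Lf a ⊓ 1) ∂μ = 1 := by
    rw [hD, ← lintegral_add_left (f := fun a => 1 - Lf a) (measurable_const.sub hLm)]
    calc ∫⁻ a, (1 - Lf a) + (Lf a ⊓ 1) ∂μ = ∫⁻ _, 1 ∂μ :=
          lintegral_congr fun a => en_one_sub_add_min (Lf a)
      _ = 1 := by simp
  have h2 : (∫⁻ a, (Lf a - 1) ∂μ) + ∫⁻ a, (Lf a ⊓ 1) ∂μ = 1 := by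
    rw [← lintegral_add_left (f := fun a => Lf a - 1) (hLm.sub measurable_const)]
    calc ∫⁻ a, (Lf a - 1) + (Lf a ⊓ 1) ∂μ = ∫⁻ a, Lf a ∂μ :=
          lintegral_congr fun a => en_sub_one_add_min (Lf a)
      _ = 1 := hEL
  have hD2 : ∫⁻ a, (Lf a - 1) ∂μ = D := by
    have := h2.trans h1.symm
    exact (ENNReal.add_left_inj hEmin_top).mp this
  -- step 2 : D + D = ∫ u * v
  have h2D : D + D = ∫⁻ a, u a * v a ∂μ := by
    have : ∀ a, u a * v a = (1 - Lf a) + (Lf a - 1) := by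
      intro a
      rw [hu, hv]
      simpa only [hSS a] using en_k3 (hStop a)
    rw [lintegral_congr this, lintegral_add_left (f := fun a => 1 - Lf a) (measurable_const.sub hLm), hD2]
  -- step 3 : Cauchy-Schwarz
  have hCS : ∫⁻ a, u a * v a ∂μ
      ≤ (∫⁻ a, u a ^ (2:ℝ) ∂μ) ^ (1/2 : ℝ) * (∫⁻ a, v a ^ (2:ℝ) ∂μ) ^ (1/2 : ℝ) := by
    refine ENNReal.lintegral_mul_le_Lp_mul_Lq μ ⟨by norm_num, by norm_num, by norm_num⟩
      hum.aemeasurable hvm.aemeasurable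
  have hrpow2 : ∀ x : ℝ≥0∞, x ^ (2:ℝ) = x * x := by
    intro x
    rw [show (2:ℝ) = ((2:ℕ):ℝ) by norm_num, ENNReal.rpow_natCast, pow_two]
  have hESS : ∫⁻ a, Sf a * Sf a ∂μ = 1 := by
    rw [lintegral_congr hSS]; exact hEL
  have hu2 : ∫⁻ a, u a ^ (2:ℝ) ∂μ = 2 - 2*A := by
    have key : (∫⁻ a, u a * u a ∂μ) + 2*A = 2 := by
      have hpt : ∀ a, u a * u a + 2 * Sf a = 1 + Sf a * Sf a := fun a => en_k2 (hStop a)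
      have : ∫⁻ a, (u a * u a + 2 * Sf a) ∂μ = ∫⁻ a, (1 + Sf a * Sf a) ∂μ :=
        lintegral_congr hpt
      rw [lintegral_add_left (f := fun a => u a * u a) (hum.mul hum), lintegral_add_left measurable_const,
        lintegral_const_mul 2 hSm, hA, hESS] at this
      simpa [one_add_one_eq_two] using this
    simp_rw [hrpow2]
    exact ENNReal.eq_sub_of_add_eq (by
      refine ENNReal.mul_ne_top (by norm_num) hAtop) key
  have hv2 : ∫⁻ a, v a ^ (2:ℝ) ∂μ = 2 + 2*A := by
    have hpt : ∀ a, v a * v a = 1 + 2 * Sf a + Sf a * Sf a := by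
      intro a; rw [hv]; ring
    simp_rw [hrpow2]
    rw [lintegral_congr hpt, lintegral_add_left (f := fun a => 1 + 2 * Sf a) (measurable_const.add (hSm.const_mul 2)),
      lintegral_add_left measurable_const, lintegral_const_mul 2 hSm, hA, hESS]
    simp only [lintegral_const, measure_univ, mul_one]
    rw [add_assoc, add_comm (2*A) 1, ← add_assoc, one_add_one_eq_two]
  -- step 4 : D ≤ c / 2
  have hDc : D + D ≤ c := by
    calc D + D = ∫⁻ a, u a * v a ∂μ := h2D
      _ ≤ (∫⁻ a, u a ^ (2:ℝ) ∂μ) ^ (1/2:ℝ) * (∫⁻ a, v a ^ (2:ℝ) ∂μ) ^ (1/2:ℝ) := hCS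
      _ = ((2 - 2*A) * (2 + 2*A)) ^ (1/2:ℝ) := by
          rw [hu2, hv2, ENNReal.mul_rpow_of_nonneg _ _ (by norm_num)]
      _ ≤ (c * c) ^ (1/2:ℝ) := ENNReal.rpow_le_rpow hc (by norm_num)
      _ = c := by
          rw [← hrpow2, ← ENNReal.rpow_mul]
          norm_num
  have hDc2 : D ≤ c / 2 := by
    rw [ENNReal.le_div_iff_mul_le (Or.inl (by norm_num)) (Or.inl (by norm_num)), mul_two]
    exact hDc
  -- step 5 : pointwise bound and conclusion
  have hpt : ∀ a, (1:ℝ≥0∞) ≤ k1 a + k0 a * Lf a + (1 - Lf a) := by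
    intro a
    rcases le_total (Lf a) 1 with h | h
    · have hL : Lf a ≤ k1 a + k0 a * Lf a := by
        calc Lf a = (k0 a + k1 a) * Lf a := by rw [hksum a, one_mul]
          _ = k0 a * Lf a + k1 a * Lf a := by ring
          _ ≤ k0 a * Lf a + k1 a := by
              refine add_le_add_right ?_ _
              calc k1 a * Lf a ≤ k1 a * 1 := mul_le_mul_right h _
                _ = k1 a := mul_one _
          _ = k1 a + k0 a * Lf a := by ring
      calc (1:ℝ≥0∞) ≤ 1 - Lf a + Lf a := le_tsub_add
        _ ≤ 1 - Lf a + (k1 a + k0 a * Lf a) := add_le_add_right hL _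
        _ = k1 a + k0 a * Lf a + (1 - Lf a) := by ring
    · have : (1:ℝ≥0∞) ≤ k1 a + k0 a * Lf a := by
        calc (1:ℝ≥0∞) = k0 a + k1 a := (hksum a).symm
          _ ≤ k0 a * Lf a + k1 a := by
              refine add_le_add_left ?_ _
              calc k0 a = k0 a * 1 := (mul_one _).symm
                _ ≤ k0 a * Lf a := mul_le_mul_right h _
          _ = k1 a + k0 a * Lf a := by ring
      exact le_trans this (le_add_right le_rfl)
  calc (1:ℝ≥0∞) = ∫⁻ _, 1 ∂μ := by simp
    _ ≤ ∫⁻ a, (k1 a + k0 a * Lf a + (1 - Lf a)) ∂μ := lintegral_mono hpt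
    _ = (∫⁻ a, k1 a ∂μ) + (∫⁻ a, k0 a * Lf a ∂μ) + D := by
        rw [lintegral_add_left (f := fun a => k1 a + k0 a * Lf a) (hk1.add (hk0.mul hLm)), lintegral_add_left hk1]
    _ ≤ (∫⁻ a, k1 a ∂μ) + (∫⁻ a, k0 a * Lf a ∂μ) + c / 2 := add_le_add_right hDc2 _

/-! ### the two inductions along the run -/

section Run

variable {Ω : Type*} [MeasurableSpace Ω] {Δ : ℝ}
  {X : ℕ → Ω → Fin 2 × ℝ} {κ : (t : ℕ) → Kernel (Fin t → Fin 2 × ℝ) (Fin 2)}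
  [∀ t, IsMarkovKernel (κ t)] {P P' : Measure Ω}
  [IsProbabilityMeasure P] [IsProbabilityMeasure P']

lemma lintegral_hist_zero (Q : Measure Ω) [IsProbabilityMeasure Q]
    (hX : ∀ t, Measurable (X t)) (f : (Fin 0 → Fin 2 × ℝ) → ℝ≥0∞) :
    ∫⁻ h, f h ∂(Q.map (hist X 0)) = f (fun ℓ => ℓ.elim0) := by
  haveI : IsProbabilityMeasure (Q.map (hist X 0)) :=
    Measure.isProbabilityMeasure_map (measurable_hist hX 0).aemeasurable
  have hconst : ∀ h : Fin 0 → Fin 2 × ℝ, f h = f (fun ℓ => ℓ.elim0) :=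
    fun h => congrArg f (funext fun ℓ => ℓ.elim0)
  rw [lintegral_congr hconst, lintegral_const, measure_univ, mul_one]

lemma kernel_sum_two (t : ℕ) (h : Fin t → Fin 2 × ℝ) :
    κ t h {0} + κ t h {1} = 1 := by
  have huniv : (Set.univ : Set (Fin 2)) = {0} ∪ {1} := by
    ext i
    simp only [Set.mem_univ, Set.mem_union, Set.mem_singleton_iff, true_iff]
    omega
  have hdisj : Disjoint ({0} : Set (Fin 2)) {1} := by
    simp [Set.disjoint_singleton]
  rw [← measure_union hdisj (measurableSet_singleton 1), ← huniv, measure_univ]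

/-- Change of measure: integrals under the run of `ν'` are integrals against the
likelihood-ratio process under the run of `ν`. -/
lemma change_of_measure
    (hP : IsBanditRun X κ
      (fun i => if i = 0 then gaussianReal 0 1 else gaussianReal (-Δ) 1) P)
    (hP' : IsBanditRun X κ
      (fun i => if i = 0 then gaussianReal (-Δ) 1 else gaussianReal 0 1) P') :
    ∀ (t : ℕ) (f : (Fin t → Fin 2 × ℝ) → ℝ≥0∞), Measurable f →
      ∫⁻ h, f h ∂(P'.map (hist X t)) = ∫⁻ h, f h * LR Δ h ∂(P.map (hist X t)) := by
  haveI h1 : ∀ i : Fin 2, IsProbabilityMeasure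
      ((fun i : Fin 2 => if i = 0 then gaussianReal 0 1 else gaussianReal (-Δ) 1) i) :=
    nu_prob Δ
  haveI h2 : ∀ i : Fin 2, IsProbabilityMeasure
      ((fun i : Fin 2 => if i = 0 then gaussianReal (-Δ) 1 else gaussianReal 0 1) i) :=
    nu'_prob Δ
  intro t
  induction t with
  | zero =>
    intro f hf
    rw [lintegral_hist_zero P' hP'.1 f, lintegral_hist_zero P hP.1 _]
    simp [LR]
  | succ t ih =>
    intro f hf
    have hsnoc_right : ∀ (h : Fin t → Fin 2 × ℝ) (i : Fin 2),
        Measurable fun x : ℝ => f (Fin.snoc h (i, x)) := by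
      intro h i
      exact hf.comp ((measurable_snoc t).comp
        (measurable_const.prodMk (measurable_const.prodMk measurable_id)))
    set φ : (Fin t → Fin 2 × ℝ) → ℝ≥0∞ := fun h => ∑ i, κ t h {i} *
      ∫⁻ x, g Δ (i, x) * f (Fin.snoc h (i, x))
        ∂((fun i : Fin 2 => if i = 0 then gaussianReal 0 1 else gaussianReal (-Δ) 1) i)
      with hφ
    have hφm : Measurable φ := by
      refine Finset.measurable_sum _ fun i _ => ?_
      refine (Kernel.measurable_coe _ (measurableSet_singleton i)).mul ?_
      refine Measurable.lintegral_prod_right' (f := fun p : (Fin t → Fin 2 × ℝ) × ℝ =>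
        g Δ (i, p.2) * f (Fin.snoc p.1 (i, p.2))) ?_
      refine Measurable.mul ?_ ?_
      · exact (measurable_g Δ).comp (measurable_const.prodMk measurable_snd)
      · exact hf.comp ((measurable_snoc t).comp
          (measurable_fst.prodMk (measurable_const.prodMk measurable_snd)))
    calc ∫⁻ h, f h ∂(P'.map (hist X (t+1)))
        = ∫⁻ h, ∑ i, κ t h {i} * ∫⁻ x, f (Fin.snoc h (i, x))
            ∂((fun i : Fin 2 => if i = 0 then gaussianReal (-Δ) 1 else gaussianReal 0 1) i)
            ∂(P'.map (hist X t)) := step hP' t hf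
      _ = ∫⁻ h, φ h ∂(P'.map (hist X t)) := by
          refine lintegral_congr fun h => ?_
          refine Finset.sum_congr rfl fun i _ => ?_
          rw [coord_change Δ i (hsnoc_right h i)]
      _ = ∫⁻ h, φ h * LR Δ h ∂(P.map (hist X t)) := ih φ hφm
      _ = ∫⁻ h, ∑ i, κ t h {i} * ∫⁻ x, f (Fin.snoc h (i, x)) * LR Δ (Fin.snoc h (i, x))
            ∂((fun i : Fin 2 => if i = 0 then gaussianReal 0 1 else gaussianReal (-Δ) 1) i)
            ∂(P.map (hist X t)) := by
          refine lintegral_congr fun h => ?_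
          rw [hφ, Finset.sum_mul]
          refine Finset.sum_congr rfl fun i _ => ?_
          rw [mul_assoc]
          congr 1
          have hmeas : Measurable fun x : ℝ => g Δ (i, x) * f (Fin.snoc h (i, x)) :=
            ((measurable_g Δ).comp (measurable_const.prodMk measurable_id)).mul
              (hsnoc_right h i)
          calc (∫⁻ x, g Δ (i, x) * f (Fin.snoc h (i, x))
                ∂((fun i : Fin 2 => if i = 0 then gaussianReal 0 1 else gaussianReal (-Δ) 1) i))
                * LR Δ h
              = ∫⁻ x, g Δ (i, x) * f (Fin.snoc h (i, x)) * LR Δ h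
                ∂((fun i : Fin 2 => if i = 0 then gaussianReal 0 1 else gaussianReal (-Δ) 1) i) :=
                (lintegral_mul_const _ hmeas).symm
            _ = ∫⁻ x, f (Fin.snoc h (i, x)) * LR Δ (Fin.snoc h (i, x))
                ∂((fun i : Fin 2 => if i = 0 then gaussianReal 0 1 else gaussianReal (-Δ) 1) i) := by
                refine lintegral_congr fun x => ?_
                rw [LR_snoc]
                ring
      _ = ∫⁻ h, f h * LR Δ h ∂(P.map (hist X (t+1))) :=
          (step hP t (hf.mul (measurable_LR Δ (t+1)))).symm

/-- Hellinger affinity along the run decays geometrically. -/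
lemma affinity
    (hP : IsBanditRun X κ
      (fun i => if i = 0 then gaussianReal 0 1 else gaussianReal (-Δ) 1) P) :
    ∀ t : ℕ, ∫⁻ h, SR Δ h ∂(P.map (hist X t))
      = (ENNReal.ofReal (rexp (-(Δ^2)/8)))^t := by
  haveI h1 : ∀ i : Fin 2, IsProbabilityMeasure
      ((fun i : Fin 2 => if i = 0 then gaussianReal 0 1 else gaussianReal (-Δ) 1) i) :=
    nu_prob Δ
  intro t
  induction t with
  | zero =>
    rw [lintegral_hist_zero P hP.1 _]
    simp [SR]
  | succ t ih =>
    rw [step hP t (measurable_SR Δ (t+1))]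
    have hin : ∀ (h : Fin t → Fin 2 × ℝ) (i : Fin 2),
        ∫⁻ x, SR Δ (Fin.snoc h (i, x))
          ∂((fun i : Fin 2 => if i = 0 then gaussianReal 0 1 else gaussianReal (-Δ) 1) i)
        = SR Δ h * ENNReal.ofReal (rexp (-(Δ^2)/8)) := by
      intro h i
      calc ∫⁻ x, SR Δ (Fin.snoc h (i, x))
            ∂((fun i : Fin 2 => if i = 0 then gaussianReal 0 1 else gaussianReal (-Δ) 1) i)
          = ∫⁻ x, SR Δ h * sq Δ (i, x)
            ∂((fun i : Fin 2 => if i = 0 then gaussianReal 0 1 else gaussianReal (-Δ) 1) i) := by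
            refine lintegral_congr fun x => ?_
            rw [SR_snoc]
        _ = SR Δ h * ∫⁻ x, sq Δ (i, x)
            ∂((fun i : Fin 2 => if i = 0 then gaussianReal 0 1 else gaussianReal (-Δ) 1) i) :=
            lintegral_const_mul _ ((measurable_sq Δ).comp
              (measurable_const.prodMk measurable_id))
        _ = SR Δ h * ENNReal.ofReal (rexp (-(Δ^2)/8)) := by rw [coord_sq]
    calc ∫⁻ h, ∑ i, κ t h {i} * ∫⁻ x, SR Δ (Fin.snoc h (i, x))
          ∂((fun i : Fin 2 => if i = 0 then gaussianReal 0 1 else gaussianReal (-Δ) 1) i)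
          ∂(P.map (hist X t))
        = ∫⁻ h, SR Δ h * ENNReal.ofReal (rexp (-(Δ^2)/8)) ∂(P.map (hist X t)) := by
          refine lintegral_congr fun h => ?_
          calc ∑ i, κ t h {i} * ∫⁻ x, SR Δ (Fin.snoc h (i, x))
                ∂((fun i : Fin 2 => if i = 0 then gaussianReal 0 1 else gaussianReal (-Δ) 1) i)
              = ∑ i : Fin 2, κ t h {i} * (SR Δ h * ENNReal.ofReal (rexp (-(Δ^2)/8))) := by
                refine Finset.sum_congr rfl fun i _ => ?_
                rw [hin h i]
            _ = (κ t h {0} + κ t h {1}) * (SR Δ h * ENNReal.ofReal (rexp (-(Δ^2)/8))) := by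
                rw [Fin.sum_univ_two, add_mul]
            _ = SR Δ h * ENNReal.ofReal (rexp (-(Δ^2)/8)) := by
                rw [kernel_sum_two, one_mul]
      _ = (∫⁻ h, SR Δ h ∂(P.map (hist X t))) * ENNReal.ofReal (rexp (-(Δ^2)/8)) :=
          lintegral_mul_const _ (measurable_SR Δ t)
      _ = (ENNReal.ofReal (rexp (-(Δ^2)/8)))^(t+1) := by rw [ih]; exact (pow_succ _ t).symm

/-- Identification of the probability of pulling arm `i` at round `t`. -/
lemma prob_arm {ν : Fin 2 → Measure ℝ} [∀ i, IsProbabilityMeasure (ν i)]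
    {Q : Measure Ω} [IsProbabilityMeasure Q] (hQ : IsBanditRun X κ ν Q) (t : ℕ) (i : Fin 2) :
    Q {ω | (X t ω).1 = i} = ∫⁻ h, κ t h {i} ∂(Q.map (hist X t)) := by
  have := hQ.2 t Set.univ MeasurableSet.univ i Set.univ MeasurableSet.univ
  simp at this
  exact this

end Run

section Round

variable {Ω : Type*} [MeasurableSpace Ω] {Δ : ℝ}
  {X : ℕ → Ω → Fin 2 × ℝ} {κ : (t : ℕ) → Kernel (Fin t → Fin 2 × ℝ) (Fin 2)}
  [∀ t, IsMarkovKernel (κ t)] {P P' : Measure Ω}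
  [IsProbabilityMeasure P] [IsProbabilityMeasure P']

lemma round_bound (hΔ : 0 ≤ Δ)
    (hP : IsBanditRun X κ
      (fun i => if i = 0 then gaussianReal 0 1 else gaussianReal (-Δ) 1) P)
    (hP' : IsBanditRun X κ
      (fun i => if i = 0 then gaussianReal (-Δ) 1 else gaussianReal 0 1) P')
    (t : ℕ) :
    (1:ℝ≥0∞) ≤ P {ω | (X t ω).1 = 1} + P' {ω | (X t ω).1 = 0}
      + ENNReal.ofReal (Δ * Real.sqrt t) / 2 := by
  set μ := P.map (hist X t) with hμ
  haveI : IsProbabilityMeasure μ :=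
    Measure.isProbabilityMeasure_map (measurable_hist hP.1 t).aemeasurable
  haveI : IsProbabilityMeasure (P'.map (hist X t)) :=
    Measure.isProbabilityMeasure_map (measurable_hist hP'.1 t).aemeasurable
  set A := (ENNReal.ofReal (rexp (-(Δ^2)/8))) ^ t with hA
  have hEL : ∫⁻ h, LR Δ h ∂μ = 1 := by
    have h0 := change_of_measure hP hP' t (fun _ => (1:ℝ≥0∞)) measurable_const
    simp only [one_mul] at h0
    rw [← h0]
    simp
  have hq' : P' {ω | (X t ω).1 = 0} = ∫⁻ h, κ t h {0} * LR Δ h ∂μ := by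
    haveI := nu'_prob Δ
    rw [prob_arm hP' t 0]
    exact change_of_measure hP hP' t (fun h => κ t h {0})
      (Kernel.measurable_coe _ (measurableSet_singleton 0))
  have hq : P {ω | (X t ω).1 = 1} = ∫⁻ h, κ t h {1} ∂μ := by
    haveI := nu_prob Δ
    exact prob_arm hP t 1
  have hSA : ∫⁻ h, SR Δ h ∂μ = A := affinity hP t
  have hr1 : ENNReal.ofReal (rexp (-(Δ^2)/8)) ≤ 1 := by
    refine ENNReal.ofReal_le_one.mpr (Real.exp_le_one_iff.mpr ?_)
    have : 0 ≤ Δ^2/8 := by positivity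
    linarith
  have hA1 : A ≤ 1 := pow_le_one' hr1 t
  have hcc : (2 - 2*A) * (2 + 2*A)
      ≤ ENNReal.ofReal (Δ * Real.sqrt t) * ENNReal.ofReal (Δ * Real.sqrt t) := by
    have h2A : 2*A ≤ 2 := by
      calc 2*A ≤ 2*1 := mul_le_mul_right hA1 2
        _ = 2 := mul_one 2
    have hfac : (2-2*A)*(2+2*A) = 4 - (2*A)*(2*A) :=
      ENNReal.eq_sub_of_add_eq
        (ENNReal.mul_ne_top
          (lt_of_le_of_lt h2A (by norm_num)).ne (lt_of_le_of_lt h2A (by norm_num)).ne)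
        (en_k4 h2A)
    have hA' : A = ENNReal.ofReal (rexp (-(Δ^2)/8)^t) := by
      rw [hA, ENNReal.ofReal_pow (exp_nonneg _)]
    have hAA : (2*A)*(2*A) = ENNReal.ofReal (4 * rexp (-(Δ^2)/8)^(2*t)) := by
      calc (2*A)*(2*A) = 4*(A*A) := by ring
        _ = ENNReal.ofReal 4 * (ENNReal.ofReal (rexp (-(Δ^2)/8)^t)
              * ENNReal.ofReal (rexp (-(Δ^2)/8)^t)) := by
            rw [← hA']
            congr 1
            simp
        _ = ENNReal.ofReal (4 * (rexp (-(Δ^2)/8)^t * rexp (-(Δ^2)/8)^t)) := by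
            rw [← ENNReal.ofReal_mul (by positivity), ← ENNReal.ofReal_mul (by norm_num)]
        _ = ENNReal.ofReal (4 * rexp (-(Δ^2)/8)^(2*t)) := by
            congr 1
            ring
    have hCC : ENNReal.ofReal (Δ * Real.sqrt t) * ENNReal.ofReal (Δ * Real.sqrt t)
        = ENNReal.ofReal (Δ^2 * t) := by
      rw [← ENNReal.ofReal_mul (by positivity)]
      congr 1
      rw [show (Δ * Real.sqrt t) * (Δ * Real.sqrt t) = Δ^2*(Real.sqrt t * Real.sqrt t) by ring,
        Real.mul_self_sqrt (Nat.cast_nonneg t)]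
    rw [hfac, tsub_le_iff_right, hAA, hCC,
      ← ENNReal.ofReal_add (by positivity) (by positivity),
      show (4:ℝ≥0∞) = ENNReal.ofReal (4:ℝ) by simp]
    refine ENNReal.ofReal_le_ofReal ?_
    have hexp : rexp (-(Δ^2)/8)^(2*t) = rexp (-(Δ^2) * t / 4) := by
      rw [← Real.exp_nat_mul]
      congr 1
      push_cast
      ring
    have hle := Real.add_one_le_exp (-(Δ^2) * t / 4)
    rw [hexp]
    nlinarith [Real.exp_pos (-(Δ^2) * t / 4)]
  have := abstract_bound μ (LR Δ) (SR Δ) (measurable_LR Δ t) (measurable_SR Δ t)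
    (SR_mul_SR Δ) (SR_ne_top Δ)
    (fun h => κ t h {0}) (fun h => κ t h {1})
    (Kernel.measurable_coe _ (measurableSet_singleton 0))
    (Kernel.measurable_coe _ (measurableSet_singleton 1))
    (kernel_sum_two t) hEL hSA hA1 hcc
  rw [← hq, ← hq'] at this
  exact this

end Round

end BanditLB

open BanditLB

/-- **Lower bound when both `μ⋆` and `Δ` are known (Theorem 4).**
Let `Δ ∈ (0,1]`, `ν = N(0,1) ⊗ N(−Δ,1)` and `ν' = N(−Δ,1) ⊗ N(0,1)`.  For any policy
(Markov kernels `κ`) run on both instances, and every `n ≥ 1` with `n ≥ 1/Δ²`,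
`max (R_n(ν), R_n(ν')) ≥ 1/(4Δ)`. -/
theorem lower_bound_known_mu_and_gap
    {Ω : Type*} [MeasurableSpace Ω]
    (Δ : ℝ) (hΔ : Δ ∈ Set.Ioc (0 : ℝ) 1)
    (X : ℕ → Ω → Fin 2 × ℝ)
    (κ : (t : ℕ) → Kernel (Fin t → Fin 2 × ℝ) (Fin 2)) [∀ t, IsMarkovKernel (κ t)]
    (P P' : Measure Ω) [IsProbabilityMeasure P] [IsProbabilityMeasure P']
    (hP : IsBanditRun X κ
      (fun i => if i = 0 then gaussianReal 0 1 else gaussianReal (-Δ) 1) P)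
    (hP' : IsBanditRun X κ
      (fun i => if i = 0 then gaussianReal (-Δ) 1 else gaussianReal 0 1) P')
    (n : ℕ) (hn : 1 ≤ n) (hn' : 1 / Δ ^ 2 ≤ (n : ℝ)) :
    1 / (4 * Δ) ≤ max (banditRegret X n (fun i => if i = 0 then 0 else -Δ) P)
        (banditRegret X n (fun i => if i = 0 then -Δ else 0) P') := by
  obtain ⟨hΔpos, hΔ1⟩ := hΔ
  have hpmeas : ∀ (t : ℕ) (i : Fin 2), MeasurableSet {ω | (X t ω).1 = i} :=
    fun t i => (hP.1 t).fst (measurableSet_singleton i)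
  set p : ℕ → ℝ := fun t => (P {ω | (X t ω).1 = 1}).toReal with hp
  set p' : ℕ → ℝ := fun t => (P' {ω | (X t ω).1 = 0}).toReal with hp'
  have hpnn : ∀ t, 0 ≤ p t := fun t => ENNReal.toReal_nonneg
  have hpnn' : ∀ t, 0 ≤ p' t := fun t => ENNReal.toReal_nonneg
  -- identify the two regrets
  have hint : ∀ t : ℕ, ∫ ω, (fun i : Fin 2 => if i = 0 then (0:ℝ) else -Δ) ((X t ω).1) ∂P
      = p t * (-Δ) := by
    intro t
    have heq : (fun ω => (fun i : Fin 2 => if i = 0 then (0:ℝ) else -Δ) ((X t ω).1))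
        = Set.indicator {ω | (X t ω).1 = 1} (fun _ => -Δ) := by
      funext ω
      by_cases h : (X t ω).1 = 0
      · have h1 : ω ∉ {ω | (X t ω).1 = 1} := by
          simp only [Set.mem_setOf_eq, h]
          decide
        simp only [if_pos h, Set.indicator_of_notMem h1]
      · have h1 : ω ∈ {ω | (X t ω).1 = 1} := by
          simp only [Set.mem_setOf_eq]
          omega
        simp only [if_neg h, Set.indicator_of_mem h1]
    rw [heq, integral_indicator_const _ (hpmeas t 1), smul_eq_mul, hp]
    rfl
  have hint' : ∀ t : ℕ, ∫ ω, (fun i : Fin 2 => if i = 0 then -Δ else (0:ℝ)) ((X t ω).1) ∂P'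
      = p' t * (-Δ) := by
    intro t
    have heq : (fun ω => (fun i : Fin 2 => if i = 0 then -Δ else (0:ℝ)) ((X t ω).1))
        = Set.indicator {ω | (X t ω).1 = 0} (fun _ => -Δ) := by
      funext ω
      by_cases h : (X t ω).1 = 0
      · have h1 : ω ∈ {ω | (X t ω).1 = 0} := h
        simp only [if_pos h, Set.indicator_of_mem h1]
      · have h1 : ω ∉ {ω | (X t ω).1 = 0} := h
        simp only [if_neg h, Set.indicator_of_notMem h1]
    rw [heq, integral_indicator_const _ (hpmeas t 0), smul_eq_mul, hp']
    rfl
  have hRP : banditRegret X n (fun i => if i = 0 then 0 else -Δ) P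
      = ∑ t ∈ Finset.range n, Δ * p t := by
    rw [banditRegret]
    have hmax : max ((fun i : Fin 2 => if i = 0 then (0:ℝ) else -Δ) 0)
        ((fun i : Fin 2 => if i = 0 then (0:ℝ) else -Δ) 1) = 0 := by
      have h1 : ((fun i : Fin 2 => if i = 0 then (0:ℝ) else -Δ) 0) = 0 := by norm_num
      have h2 : ((fun i : Fin 2 => if i = 0 then (0:ℝ) else -Δ) 1) = -Δ := by
        norm_num [Fin.one_eq_zero_iff]
      rw [h1, h2]
      exact max_eq_left (by linarith)
    rw [hmax, mul_zero, zero_sub,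
      show (∑ t ∈ Finset.range n, ∫ ω, (fun i : Fin 2 => if i = 0 then (0:ℝ) else -Δ)
          ((X t ω).1) ∂P) = ∑ t ∈ Finset.range n, -(Δ * p t) from
        Finset.sum_congr rfl (fun t _ => by rw [hint t]; ring)]
    rw [Finset.sum_neg_distrib, neg_neg]
  have hRP' : banditRegret X n (fun i => if i = 0 then -Δ else 0) P'
      = ∑ t ∈ Finset.range n, Δ * p' t := by
    rw [banditRegret]
    have hmax : max ((fun i : Fin 2 => if i = 0 then -Δ else (0:ℝ)) 0)
        ((fun i : Fin 2 => if i = 0 then -Δ else (0:ℝ)) 1) = 0 := by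
      have h1 : ((fun i : Fin 2 => if i = 0 then -Δ else (0:ℝ)) 0) = -Δ := by norm_num
      have h2 : ((fun i : Fin 2 => if i = 0 then -Δ else (0:ℝ)) 1) = 0 := by
        norm_num [Fin.one_eq_zero_iff]
      rw [h1, h2]
      exact max_eq_right (by linarith)
    rw [hmax, mul_zero, zero_sub,
      show (∑ t ∈ Finset.range n, ∫ ω, (fun i : Fin 2 => if i = 0 then -Δ else (0:ℝ))
          ((X t ω).1) ∂P') = ∑ t ∈ Finset.range n, -(Δ * p' t) from
        Finset.sum_congr rfl (fun t _ => by rw [hint' t]; ring)]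
    rw [Finset.sum_neg_distrib, neg_neg]
  -- per-round bound, real form
  have hround : ∀ t : ℕ, 1 - Δ * Real.sqrt t / 2 ≤ p t + p' t := by
    intro t
    have h1 := round_bound hΔpos.le hP hP' t
    have ha : P {ω | (X t ω).1 = 1} ≠ ∞ := measure_ne_top _ _
    have hb : P' {ω | (X t ω).1 = 0} ≠ ∞ := measure_ne_top _ _
    have hc : (ENNReal.ofReal (Δ * Real.sqrt t) / 2) ≠ ∞ :=
      (ENNReal.div_lt_top ENNReal.ofReal_ne_top (by norm_num)).ne
    have h2 := ENNReal.toReal_mono (by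
      exact ENNReal.add_ne_top.mpr ⟨ENNReal.add_ne_top.mpr ⟨ha, hb⟩, hc⟩) h1
    rw [ENNReal.toReal_one, ENNReal.toReal_add (ENNReal.add_ne_top.mpr ⟨ha, hb⟩) hc,
      ENNReal.toReal_add ha hb, ENNReal.toReal_div,
      ENNReal.toReal_ofReal (by positivity)] at h2
    simp only [ENNReal.toReal_ofNat] at h2
    rw [hp, hp']
    linarith
  -- the effective horizon
  set m : ℕ := ⌈1 / Δ^2⌉₊ with hm
  have hm_le_n : m ≤ n := Nat.ceil_le.mpr hn'
  have hm_ge : 1/Δ^2 ≤ (m:ℝ) := Nat.le_ceil _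
  have hhalf : ∀ t ∈ Finset.range m, Δ * (1/2) ≤ Δ * (p t + p' t) := by
    intro t ht
    rw [Finset.mem_range] at ht
    have ht' : (t:ℝ) < 1/Δ^2 := Nat.lt_ceil.mp ht
    have hsq : Real.sqrt t ≤ 1/Δ := by
      have h3 : Real.sqrt t ≤ Real.sqrt (1/Δ^2) := Real.sqrt_le_sqrt ht'.le
      rwa [show 1/Δ^2 = (1/Δ)^2 by ring, Real.sqrt_sq (by positivity)] at h3
    have h4 : Δ * Real.sqrt t ≤ 1 := by
      have := mul_le_mul_of_nonneg_left hsq hΔpos.le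
      rwa [mul_one_div, div_self hΔpos.ne'] at this
    have h5 : 1/2 ≤ p t + p' t := by
      have := hround t
      linarith
    exact mul_le_mul_of_nonneg_left h5 hΔpos.le
  -- sum bound
  have hsum : 1/(2*Δ) ≤ (∑ t ∈ Finset.range n, Δ * p t) + ∑ t ∈ Finset.range n, Δ * p' t := by
    have h6 : (∑ t ∈ Finset.range m, Δ * (p t + p' t))
        ≤ (∑ t ∈ Finset.range n, Δ * p t) + ∑ t ∈ Finset.range n, Δ * p' t := by
      rw [← Finset.sum_add_distrib]
      have h7 : ∀ t ∈ Finset.range m, Δ * (p t + p' t) = Δ * p t + Δ * p' t :=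
        fun t _ => by ring
      rw [Finset.sum_congr rfl h7]
      refine Finset.sum_le_sum_of_subset_of_nonneg
        (Finset.range_subset_range.mpr hm_le_n) ?_
      intro t _ _
      have := hpnn t; have := hpnn' t
      positivity
    have h8 : (m:ℝ) * (Δ * (1/2)) ≤ ∑ t ∈ Finset.range m, Δ * (p t + p' t) := by
      calc (m:ℝ) * (Δ * (1/2)) = ∑ _t ∈ Finset.range m, Δ * (1/2) := by
            rw [Finset.sum_const, Finset.card_range, nsmul_eq_mul]
        _ ≤ ∑ t ∈ Finset.range m, Δ * (p t + p' t) := Finset.sum_le_sum hhalf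
    have h9 : 1/(2*Δ) ≤ (m:ℝ) * (Δ * (1/2)) := by
      have h10 : (1/Δ^2) * (Δ * (1/2)) ≤ (m:ℝ) * (Δ * (1/2)) := by
        refine mul_le_mul_of_nonneg_right hm_ge (by positivity)
      have h11 : (1/Δ^2) * (Δ * (1/2)) = 1/(2*Δ) := by
        field_simp
      linarith
    linarith
  rw [hRP, hRP']
  have hmaxsum : (∑ t ∈ Finset.range n, Δ * p t) + (∑ t ∈ Finset.range n, Δ * p' t)
      ≤ 2 * max (∑ t ∈ Finset.range n, Δ * p t) (∑ t ∈ Finset.range n, Δ * p' t) := by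
    have := le_max_left (∑ t ∈ Finset.range n, Δ * p t) (∑ t ∈ Finset.range n, Δ * p' t)
    have := le_max_right (∑ t ∈ Finset.range n, Δ * p t) (∑ t ∈ Finset.range n, Δ * p' t)
    linarith
  have h12 : 2 * (1/(4*Δ)) = 1/(2*Δ) := by
    field_simp
    ring
  linarith
end
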